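/- Let G be a finite simple graph and u, v two vertices with u ≠ v. There exists a k-dominating set of G avoiding both u and v if and only if either both u and v have degree at least k+1, or u and v are non-adjacent and both have degree at least k. (Stated in the paper for k = 4.) -/

import Mathlib

open SimpleGraph

/-- `D` is a `k`-dominating set of `G`: every vertex not in `D` has at least
`k` neighbors in `D`. -/
def IsKDomSet {V : Type*} (G : SimpleGraph V) (k : ℕ) (D : Finset V) : Prop :=
  ∀ v : V, v ∉ D → k ≤ {w : V | G.Adj v w ∧ w ∈ D}.ncard

/-- `I` is an independent set of `G`. -/
def IsIndepFinset {V : Type*} (G : SimpleGraph V) (I : Finset V) : Prop :=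
  ∀ u ∈ I, ∀ v ∈ I, ¬ G.Adj u v

/-- The number of `k`-dominating sets of `G`. -/
noncomputable def numKDom {V : Type*} (G : SimpleGraph V) (k : ℕ) : ℕ :=
  Nat.card {D : Finset V // IsKDomSet G k D}

/-- The number of independent sets of `G`. -/
noncomputable def numIndep {V : Type*} (G : SimpleGraph V) : ℕ :=
  Nat.card {I : Finset V // IsIndepFinset G I}

/-- A graph is outerplanar iff its vertices can be placed (injectively) on a line
(thought of as positions on a circle) so that edges, drawn as chords, do not cross:
no two edges `ab`, `cd` interleave as `a < c < b < d`. -/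
def IsOuterplanar {V : Type*} (G : SimpleGraph V) : Prop :=
  ∃ f : V → ℕ, Function.Injective f ∧
    ∀ a b c d : V, G.Adj a b → G.Adj c d →
      ¬ (f a < f c ∧ f c < f b ∧ f b < f d)

/-- A graph is maximal outerplanar if it is outerplanar and adding any edge
between distinct non-adjacent vertices destroys outerplanarity. -/
def IsMaxOuterplanar {V : Type*} (G : SimpleGraph V) : Prop :=
  IsOuterplanar G ∧ ∀ u v : V, u ≠ v → ¬ G.Adj u v →
    ¬ IsOuterplanar (G ⊔ SimpleGraph.fromEdgeSet {s(u, v)})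


/-- Forward helper: if `k ≤ #{w | Adj u w ∧ w ∈ D}` and `v ∉ D`, then the
degree of `u` is at least `k`, and at least `k+1` when `u` is adjacent to `v`. -/
theorem fwd_aux {V : Type*} [Fintype V] (G : SimpleGraph V) (k : ℕ)
    (u v : V) (D : Finset V) (hvD : v ∉ D)
    (h : k ≤ {w : V | G.Adj u w ∧ w ∈ D}.ncard) :
    (¬ G.Adj u v → k ≤ {w : V | G.Adj u w}.ncard) ∧
    (G.Adj u v → k + 1 ≤ {w : V | G.Adj u w}.ncard) := by
  have hsub : {w : V | G.Adj u w ∧ w ∈ D} ⊆ {w : V | G.Adj u w} \ {v} := by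
    rintro w ⟨hw, hwD⟩
    exact ⟨hw, by rintro rfl; exact hvD hwD⟩
  constructor
  · intro _
    exact h.trans (Set.ncard_le_ncard (fun w hw => hw.1) (Set.toFinite _))
  · intro hadj
    have hvmem : v ∈ {w : V | G.Adj u w} := hadj
    have heq : ({w : V | G.Adj u w} \ {v}).ncard + 1 = {w : V | G.Adj u w}.ncard :=
      Set.ncard_diff_singleton_add_one hvmem (Set.toFinite _)
    have := Set.ncard_le_ncard hsub (Set.toFinite _)
    omega

theorem bwd_aux {V : Type*} [Fintype V] (G : SimpleGraph V) (k : ℕ)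
    (u v : V)
    (h : (G.Adj u v → k + 1 ≤ {w : V | G.Adj u w}.ncard) ∧
         (¬ G.Adj u v → k ≤ {w : V | G.Adj u w}.ncard)) :
    k ≤ {w : V | G.Adj u w ∧ w ≠ v ∧ w ≠ u}.ncard := by
  have heqset : {w : V | G.Adj u w ∧ w ≠ v ∧ w ≠ u} = {w : V | G.Adj u w} \ {v} := by
    ext w
    simp only [Set.mem_setOf_eq, Set.mem_diff, Set.mem_singleton_iff]
    exact ⟨fun ⟨a, b, _⟩ => ⟨a, b⟩, fun ⟨a, b⟩ => ⟨a, b, fun h' => (G.loopless.irrefl u) (h' ▸ a)⟩⟩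
  rw [heqset]
  by_cases hadj : G.Adj u v
  · have hvmem : v ∈ {w : V | G.Adj u w} := hadj
    have heq : ({w : V | G.Adj u w} \ {v}).ncard + 1 = {w : V | G.Adj u w}.ncard :=
      Set.ncard_diff_singleton_add_one hvmem (Set.toFinite _)
    have := h.1 hadj
    omega
  · have hvnot : v ∉ {w : V | G.Adj u w} := hadj
    rw [Set.diff_singleton_eq_self hvnot]
    exact h.2 hadj

/-- There is a `k`-dominating set avoiding both `u` and `v` iff either both have
degree at least `k + 1`, or they are non-adjacent and both have degree at least `k`. -/
theorem stmt_14 {V : Type*} [Fintype V] (G : SimpleGraph V) (k : ℕ) (hk : 1 ≤ k)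
    (u v : V) (huv : u ≠ v) :
    (∃ D : Finset V, IsKDomSet G k D ∧ u ∉ D ∧ v ∉ D) ↔
      (k + 1 ≤ {w : V | G.Adj u w}.ncard ∧ k + 1 ≤ {w : V | G.Adj v w}.ncard) ∨
        (¬ G.Adj u v ∧ k ≤ {w : V | G.Adj u w}.ncard ∧
          k ≤ {w : V | G.Adj v w}.ncard) := by
  constructor
  · rintro ⟨D, hD, huD, hvD⟩
    have hu := fwd_aux G k u v D hvD (hD u huD)
    have hv := fwd_aux G k v u D huD (hD v hvD)
    by_cases hadj : G.Adj u v
    · exact Or.inl ⟨hu.2 hadj, hv.2 hadj.symm⟩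
    · exact Or.inr ⟨hadj, hu.1 hadj, hv.1 (fun h => hadj h.symm)⟩
  · intro h
    classical
    refine ⟨(Finset.univ.erase u).erase v, ?_, by simp [huv], by simp⟩
    intro w hw
    simp only [Finset.mem_erase, Finset.mem_univ, and_true, not_and, not_not] at hw
    have hmem : ∀ x : V, (x ∈ (Finset.univ.erase u).erase v) ↔ (x ≠ v ∧ x ≠ u) := by
      intro x; simp [Finset.mem_erase]
    by_cases hwv : w = v
    · subst hwv
      have : k ≤ {x : V | G.Adj w x ∧ x ≠ u ∧ x ≠ w}.ncard := by
        apply bwd_aux G k w u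
        constructor
        · intro hadj
          rcases h with ⟨_, h2⟩ | ⟨hna, _⟩
          · exact h2
          · exact absurd hadj.symm hna
        · intro hadj
          rcases h with ⟨_, h2⟩ | ⟨_, _, h3⟩
          · omega
          · exact h3
      refine this.trans (le_of_eq ?_)
      congr 1
      ext x
      simp only [Set.mem_setOf_eq, hmem]
      tauto
    · have hwu : w = u := by tauto
      subst hwu
      have : k ≤ {x : V | G.Adj w x ∧ x ≠ v ∧ x ≠ w}.ncard := by
        apply bwd_aux G k w v
        constructor
        · intro hadj
          rcases h with ⟨h1, _⟩ | ⟨hna, _⟩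
          · exact h1
          · exact absurd hadj hna
        · intro hadj
          rcases h with ⟨h1, _⟩ | ⟨_, h2, _⟩
          · omega
          · exact h2
      refine this.trans (le_of_eq ?_)
      congr 1
      ext x
      simp only [Set.mem_setOf_eq, hmem]
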